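/- Let $(\lambda_n)_{n\ge2}$ be positive reals with $\sum_{n\ge2}\lambda_n^{-1}<\infty$, and let $X_2, X_3, \ldots$ be independent exponential random variables with $\mathbb{E}X_i = \lambda_i^{-1}$. Set $T_n = \sum_{i=n+1}^\infty X_i$ and $A_n = \mathbb{E}T_n = \sum_{i=n+1}^\infty \lambda_i^{-1}$. If $\lambda_n^{-1} = o(A_n)$ as $n\to\infty$, then $T_n / A_n \to 1$ in probability as $n \to \infty$. -/

import Mathlib

open MeasureTheory ProbabilityTheory Filter Topology Real Set

lemma my_expMeasure_ae_nonneg (r : ℝ) : ∀ᵐ x ∂(expMeasure r), 0 ≤ x := by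
  rw [ae_iff]
  have h : {x : ℝ | ¬ 0 ≤ x} = Set.Iio 0 := by ext x; simp
  rw [h, expMeasure, gammaMeasure, withDensity_apply _ measurableSet_Iio,
    setLIntegral_congr_fun measurableSet_Iio
      (fun ⦃x⦄ (hx : x < 0) => gammaPDF_of_neg hx)]
  simp

lemma my_exp_lintegral_pow {r : ℝ} (hr : 0 < r) (k : ℕ) :
    ∫⁻ x, ENNReal.ofReal (x ^ k) ∂(expMeasure r)
      = ENNReal.ofReal (Real.Gamma (k + 1) / r ^ k) := by
  have hmeas : Measurable fun x : ℝ => ENNReal.ofReal (x ^ k) :=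
    (measurable_id.pow_const k).ennreal_ofReal
  have hpdf : Measurable (gammaPDF 1 r) := (measurable_gammaPDFReal 1 r).ennreal_ofReal
  rw [expMeasure, gammaMeasure,
    lintegral_withDensity_eq_lintegral_mul _ hpdf hmeas,
    ← lintegral_add_compl _ (measurableSet_Ici (a := (0:ℝ)))]
  have left : ∫⁻ x in (Set.Ici (0:ℝ))ᶜ, (gammaPDF 1 r * fun x => ENNReal.ofReal (x ^ k)) x = 0 := by
    rw [compl_Ici]
    rw [setLIntegral_congr_fun (g := fun _ => 0) measurableSet_Iio
      (fun ⦃x⦄ (hx : x < 0) => by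
        simp [Pi.mul_apply, gammaPDF_of_neg hx]), lintegral_zero]
  have hg : ∀ x ∈ Set.Ici (0:ℝ),
      (gammaPDF 1 r * fun x => ENNReal.ofReal (x ^ k)) x
        = ENNReal.ofReal (r * Real.exp (-(r * x)) * x ^ k) := by
    intro x hx
    have hx0 : (0:ℝ) ≤ x := hx
    rw [Pi.mul_apply, gammaPDF_of_nonneg hx0, ← ENNReal.ofReal_mul (by positivity)]
    congr 1
    rw [Real.Gamma_one, Real.rpow_one, sub_self, Real.rpow_zero]
    ring
  rw [setLIntegral_congr_fun measurableSet_Ici (fun ⦃x⦄ hx => hg x hx), left, add_zero]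
  have hint : IntegrableOn (fun x : ℝ => r * Real.exp (-(r * x)) * x ^ k) (Set.Ici 0) := by
    rw [integrableOn_Ici_iff_integrableOn_Ioi]
    have h1 : IntegrableOn (fun x : ℝ => x ^ ((k:ℝ)) * Real.exp (-r * x ^ (1:ℝ))) (Set.Ioi 0) :=
      integrableOn_rpow_mul_exp_neg_mul_rpow
        (lt_of_lt_of_le neg_one_lt_zero (Nat.cast_nonneg k)) zero_lt_one hr
    have h2 : IntegrableOn (fun x : ℝ => r * (x ^ ((k:ℝ)) * Real.exp (-r * x ^ (1:ℝ))))
        (Set.Ioi 0) := h1.const_mul r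
    refine MeasureTheory.IntegrableOn.congr_fun h2 (fun x hx => ?_) measurableSet_Ioi
    have hx0 : (0:ℝ) < x := hx
    rw [Real.rpow_one, Real.rpow_natCast]
    ring
  rw [← ofReal_integral_eq_lintegral_ofReal hint
    (by filter_upwards [self_mem_ae_restrict (measurableSet_Ici (a := (0:ℝ)))] with x hx;
        have : (0:ℝ) ≤ x := hx; positivity)]
  congr 1
  rw [integral_Ici_eq_integral_Ioi]
  have hcong : ∀ x ∈ Set.Ioi (0:ℝ),
      r * Real.exp (-(r * x)) * x ^ k = r * (x ^ (((k:ℝ) + 1) - 1) * Real.exp (-(r * x))) := by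
    intro x hx
    have hx0 : (0:ℝ) < x := hx
    rw [add_sub_cancel_right, Real.rpow_natCast]
    ring
  rw [setIntegral_congr_fun measurableSet_Ioi hcong, integral_const_mul,
    integral_rpow_mul_exp_neg_mul_Ioi (by positivity) hr]
  have hp : ((1:ℝ)/r) ^ ((k:ℝ)+1) = 1 / r^(k+1) := by
    rw [show ((k:ℝ)+1) = ((k+1 : ℕ):ℝ) by push_cast; ring, Real.rpow_natCast, one_div, inv_pow,
      one_div]
  rw [hp]
  field_simp
  ring_nf


lemma my_exp_integral_pow' {r : ℝ} (hr : 0 < r) (k : ℕ) :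
    ∫ x, x ^ k ∂(expMeasure r) = Real.Gamma (k + 1) / r ^ k := by
  rw [integral_eq_lintegral_of_nonneg_ae
      ((my_expMeasure_ae_nonneg r).mono fun x hx => pow_nonneg hx k)
      (measurable_id.pow_const k).aestronglyMeasurable,
    my_exp_lintegral_pow hr k, ENNReal.toReal_ofReal]
  positivity

lemma my_exp_pow_integrable {r : ℝ} (hr : 0 < r) (k : ℕ) :
    Integrable (fun x : ℝ => x ^ k) (expMeasure r) := by
  refine ⟨(measurable_id.pow_const k).aestronglyMeasurable, ?_⟩
  rw [hasFiniteIntegral_iff_norm]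
  have h : ∫⁻ x, ENNReal.ofReal ‖x ^ k‖ ∂(expMeasure r)
      = ∫⁻ x, ENNReal.ofReal (x ^ k) ∂(expMeasure r) :=
    lintegral_congr_ae ((my_expMeasure_ae_nonneg r).mono fun x hx => by
      simp [Real.norm_eq_abs, abs_pow, abs_of_nonneg hx])
  rw [h, my_exp_lintegral_pow hr k]
  exact ENNReal.ofReal_lt_top

lemma my_exp_memℒp {r : ℝ} (hr : 0 < r) : MemLp (fun x : ℝ => x) 2 (expMeasure r) := by
  refine (memLp_two_iff_integrable_sq measurable_id.aestronglyMeasurable).2 ?_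
  exact my_exp_pow_integrable hr 2

lemma my_exp_mean {r : ℝ} (hr : 0 < r) : ∫ x, x ∂(expMeasure r) = r⁻¹ := by
  have h := my_exp_integral_pow' hr 1
  rw [show ((1:ℕ):ℝ) + 1 = 2 by norm_num, Real.Gamma_two, pow_one] at h
  simp_rw [pow_one] at h
  rw [h, one_div]

lemma my_exp_sq_mean {r : ℝ} (hr : 0 < r) : ∫ x, x ^ 2 ∂(expMeasure r) = 2 * (r⁻¹) ^ 2 := by
  have h := my_exp_integral_pow' hr 2
  have hg : Real.Gamma ((2:ℕ) + 1) = 2 := by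
    rw [Real.Gamma_nat_eq_factorial]; norm_num
  rw [show ((2:ℕ):ℝ) + 1 = ((2:ℕ):ℝ) + 1 from rfl] at h
  push_cast at h hg
  rw [h, hg]
  field_simp

theorem hitting_time_wlln {Ω : Type*} [MeasurableSpace Ω]
    (P : Measure Ω) [IsProbabilityMeasure P]
    (lam : ℕ → ℝ) (hpos : ∀ n, 0 < lam n)
    (hsum : Summable fun n => (lam n)⁻¹)
    (X : ℕ → Ω → ℝ) (hmeas : ∀ i, Measurable (X i))
    (hindep : iIndepFun X P)
    (hexp : ∀ i, Measure.map (X i) P = expMeasure (lam i))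
    (T : ℕ → Ω → ℝ) (hTmeas : ∀ n, Measurable (T n))
    (hT : ∀ᵐ ω ∂P, ∀ n, HasSum (fun i => X (n + 1 + i) ω) (T n ω))
    (A : ℕ → ℝ) (hA : ∀ n, A n = ∑' i : ℕ, (lam (n + 1 + i))⁻¹)
    (hsmall : Tendsto (fun n => (lam n)⁻¹ / A n) atTop (𝓝 0)) :
    ∀ ε > 0, Tendsto (fun n => P {ω | ε ≤ |T n ω / A n - 1|}) atTop (𝓝 0) := by
  set f : ℕ → ℝ := fun n => (lam n)⁻¹ with hfdef
  have hf_pos : ∀ n, 0 < f n := fun n => inv_pos.2 (hpos n)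
  have tail_sum : ∀ m : ℕ, Summable (fun i => f (m + i)) := fun m => by
    have h := (summable_nat_add_iff m).2 hsum
    simpa [add_comm] using h
  have hApos : ∀ n, 0 < A n := fun n => by
    rw [hA n]
    calc (0:ℝ) < f (n + 1 + 0) := hf_pos _
      _ ≤ ∑' i, f (n + 1 + i) := Summable.le_tsum (tail_sum (n+1)) 0 (fun j _ => (hf_pos _).le)
  have hAanti : Antitone A := by
    refine antitone_nat_of_succ_le fun n => ?_
    rw [hA n, hA (n+1), Summable.tsum_eq_zero_add (tail_sum (n+1))]
    have hcongr : ∀ i : ℕ, f (n + 1 + 1 + i) = f (n + 1 + (i + 1)) := fun i => by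
      congr 1; omega
    calc ∑' i, f (n + 1 + 1 + i) = ∑' i, f (n + 1 + (i + 1)) := tsum_congr hcongr
      _ ≤ f (n + 1 + 0) + ∑' i, f (n + 1 + (i + 1)) :=
        le_add_of_nonneg_left (hf_pos _).le
  -- summability of squares
  have hsq_sum : Summable (fun n => (f n) ^ 2) := by
    obtain ⟨M, hM⟩ := hsum.tendsto_atTop_zero.bddAbove_range
    refine Summable.of_nonneg_of_le (fun n => sq_nonneg _) (fun n => ?_) (hsum.mul_left M)
    have h1 : f n ≤ M := hM (Set.mem_range_self n)
    calc (f n) ^ 2 = f n * f n := sq (f n)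
      _ ≤ M * f n := mul_le_mul_of_nonneg_right h1 (hf_pos n).le
  have tail_sq : ∀ m : ℕ, Summable (fun i => (f (m + i)) ^ 2) := fun m => by
    have h := (summable_nat_add_iff m).2 hsq_sum
    simpa [add_comm] using h
  set Bsq : ℕ → ℝ := fun n => ∑' i, (f (n + 1 + i)) ^ 2 with hBdef
  have hBnonneg : ∀ n, 0 ≤ Bsq n := fun n => tsum_nonneg fun i => sq_nonneg _
  -- key smallness
  have key : ∀ δ > (0:ℝ), ∃ N, ∀ n ≥ N, Bsq n ≤ δ * A n ^ 2 := by
    intro δ hδ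
    obtain ⟨N, hN⟩ := Metric.tendsto_atTop.1 hsmall δ hδ
    refine ⟨N, fun n hn => ?_⟩
    have hterm : ∀ i : ℕ, (f (n + 1 + i)) ^ 2 ≤ (δ * A n) * f (n + 1 + i) := by
      intro i
      have h0 := hN (n + 1 + i) (by omega)
      rw [Real.dist_eq, sub_zero,
        abs_of_nonneg (div_nonneg (hf_pos _).le (hApos _).le)] at h0
      have h1 : f (n + 1 + i) ≤ δ * A (n + 1 + i) :=
        (div_le_iff₀ (hApos _)).1 h0.le
      have h2 : A (n + 1 + i) ≤ A n := hAanti (by omega)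
      have h3 : f (n + 1 + i) ≤ δ * A n :=
        h1.trans (mul_le_mul_of_nonneg_left h2 hδ.le)
      calc (f (n + 1 + i)) ^ 2 = f (n + 1 + i) * f (n + 1 + i) := sq _
        _ ≤ (δ * A n) * f (n + 1 + i) := mul_le_mul_of_nonneg_right h3 (hf_pos _).le
    calc Bsq n ≤ ∑' i, (δ * A n) * f (n + 1 + i) :=
          Summable.tsum_le_tsum hterm (tail_sq (n+1)) ((tail_sum (n+1)).mul_left _)
      _ = (δ * A n) * A n := by rw [tsum_mul_left, ← hA n]
      _ = δ * A n ^ 2 := by ring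
  -- per-variable facts
  have hXmem : ∀ i, MemLp (X i) 2 P := fun i => by
    have h : MemLp (fun x : ℝ => x) 2 (Measure.map (X i) P) := by
      rw [hexp i]; exact my_exp_memℒp (hpos i)
    exact (memLp_map_measure_iff measurable_id.aestronglyMeasurable
      (hmeas i).aemeasurable).1 h
  have hXint : ∀ i, ∫ ω, X i ω ∂P = f i := fun i => by
    have h : ∫ ω, X i ω ∂P = ∫ x, x ∂(Measure.map (X i) P) :=
      (integral_map (hmeas i).aemeasurable aestronglyMeasurable_id).symm
    rw [h, hexp i, my_exp_mean (hpos i)]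
  have hXsq : ∀ i, ∫ ω, (X i ω) ^ 2 ∂P = 2 * (f i) ^ 2 := fun i => by
    have h : ∫ ω, (X i ω) ^ 2 ∂P = ∫ x, x ^ 2 ∂(Measure.map (X i) P) :=
      (integral_map (hmeas i).aemeasurable
        (measurable_id.pow_const 2).aestronglyMeasurable).symm
    rw [h, hexp i, my_exp_sq_mean (hpos i)]
  have hvar : ∀ i, variance (X i) P = (f i) ^ 2 := fun i => by
    rw [variance_eq_sub (hXmem i)]
    have h1 : P[X i ^ 2] = 2 * (f i) ^ 2 := by
      rw [← hXsq i]; congr 1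
    have h2 : P[X i] = f i := hXint i
    rw [h1, h2]; ring
  -- main second-moment bound via Fatou
  have hmain : ∀ n, ∫⁻ ω, ENNReal.ofReal ((T n ω - A n) ^ 2) ∂P ≤ ENNReal.ofReal (Bsq n) := by
    intro n
    set Y : ℕ → Ω → ℝ := fun i => X (n + 1 + i) with hYdef
    set m : ℕ → ℝ := fun k => ∑ i ∈ Finset.range k, f (n + 1 + i) with hmdef
    have hYmem : ∀ k (i : ℕ), i ∈ Finset.range k → MemLp (Y i) 2 P := fun k i _ => hXmem _
    have hSmem : ∀ k, MemLp (∑ i ∈ Finset.range k, Y i) 2 P := fun k =>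
      memLp_finset_sum' _ (hYmem k)
    have hES : ∀ k, ∫ ω, (∑ i ∈ Finset.range k, Y i) ω ∂P = m k := fun k => by
      have h : ∫ ω, (∑ i ∈ Finset.range k, Y i) ω ∂P
          = ∫ ω, ∑ i ∈ Finset.range k, Y i ω ∂P := by
        refine integral_congr_ae (ae_of_all _ fun ω => ?_)
        simp [Finset.sum_apply]
      rw [h, integral_finset_sum _ (fun i _ => ((hXmem _).integrable one_le_two))]
      exact Finset.sum_congr rfl fun i _ => hXint _
    have hvS : ∀ k, variance (∑ i ∈ Finset.range k, Y i) P ≤ Bsq n := fun k => by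
      rw [IndepFun.variance_sum (hYmem k)
        (fun i _ j _ hij => hindep.indepFun (by omega))]
      calc ∑ i ∈ Finset.range k, variance (Y i) P
          = ∑ i ∈ Finset.range k, (f (n + 1 + i)) ^ 2 :=
            Finset.sum_congr rfl fun i _ => hvar _
        _ ≤ Bsq n := Summable.sum_le_tsum _ (fun i _ => sq_nonneg _) (tail_sq (n+1))
    have hlin : ∀ k, ∫⁻ ω, ENNReal.ofReal ((∑ i ∈ Finset.range k, Y i ω - m k) ^ 2) ∂P
        ≤ ENNReal.ofReal (Bsq n) := fun k => by
      have h1 : ENNReal.ofReal (variance (∑ i ∈ Finset.range k, Y i) P)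
          = evariance (∑ i ∈ Finset.range k, Y i) P := (hSmem k).ofReal_variance_eq
      have h2 := evariance_eq_lintegral_ofReal (∑ i ∈ Finset.range k, Y i) P
      have h3 : ∫⁻ ω, ENNReal.ofReal ((∑ i ∈ Finset.range k, Y i ω - m k) ^ 2) ∂P
          = evariance (∑ i ∈ Finset.range k, Y i) P := by
        rw [h2]
        refine lintegral_congr fun ω => ?_
        rw [hES k]
        simp [Finset.sum_apply]
      rw [h3, ← h1]
      exact ENNReal.ofReal_le_ofReal (hvS k)
    have hml : Tendsto m atTop (𝓝 (A n)) := by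
      have h := (tail_sum (n+1)).hasSum
      rw [← hA n] at h
      exact h.tendsto_sum_nat
    have hae : ∀ᵐ ω ∂P,
        Tendsto (fun k => ENNReal.ofReal ((∑ i ∈ Finset.range k, Y i ω - m k) ^ 2)) atTop
          (𝓝 (ENNReal.ofReal ((T n ω - A n) ^ 2))) := by
      filter_upwards [hT] with ω hω
      have h1 : Tendsto (fun k => ∑ i ∈ Finset.range k, Y i ω) atTop (𝓝 (T n ω)) :=
        (hω n).tendsto_sum_nat
      exact (ENNReal.continuous_ofReal.tendsto _).comp ((h1.sub hml).pow 2)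
    have hmeasS : ∀ k, Measurable fun ω =>
        ENNReal.ofReal ((∑ i ∈ Finset.range k, Y i ω - m k) ^ 2) := fun k => by
      have : Measurable fun ω => ∑ i ∈ Finset.range k, Y i ω :=
        Finset.measurable_sum _ (fun i _ => hmeas _)
      exact ((this.sub measurable_const).pow_const 2).ennreal_ofReal
    calc ∫⁻ ω, ENNReal.ofReal ((T n ω - A n) ^ 2) ∂P
        = ∫⁻ ω, liminf (fun k =>
            ENNReal.ofReal ((∑ i ∈ Finset.range k, Y i ω - m k) ^ 2)) atTop ∂P := by
          refine lintegral_congr_ae (hae.mono fun ω h => h.liminf_eq.symm)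
      _ ≤ liminf (fun k => ∫⁻ ω,
            ENNReal.ofReal ((∑ i ∈ Finset.range k, Y i ω - m k) ^ 2) ∂P) atTop :=
          lintegral_liminf_le hmeasS
      _ ≤ ENNReal.ofReal (Bsq n) := by
          refine (Filter.liminf_le_liminf (Filter.Eventually.of_forall hlin)).trans ?_
          simp [Filter.liminf_const]
  -- Markov / Chebyshev
  intro ε hε
  have hsub : ∀ n, {ω | ε ≤ |T n ω / A n - 1|}
      ⊆ {ω | ENNReal.ofReal ((ε * A n) ^ 2) ≤ ENNReal.ofReal ((T n ω - A n) ^ 2)} := by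
    intro n ω hω
    simp only [Set.mem_setOf_eq] at hω ⊢
    have hA0 := hApos n
    apply ENNReal.ofReal_le_ofReal
    have habs : |T n ω / A n - 1| = |T n ω - A n| / A n := by
      rw [show T n ω / A n - 1 = (T n ω - A n) / A n by field_simp, abs_div, abs_of_pos hA0]
    rw [habs] at hω
    have h1 : ε * A n ≤ |T n ω - A n| := by
      have := mul_le_mul_of_nonneg_right hω hA0.le
      rwa [div_mul_cancel₀ _ hA0.ne'] at this
    have h0 : (0:ℝ) ≤ ε * A n := (mul_pos hε hA0).le
    calc (ε * A n) ^ 2 ≤ |T n ω - A n| ^ 2 := by nlinarith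
      _ = (T n ω - A n) ^ 2 := sq_abs _
  have hbound : ∀ n, P {ω | ε ≤ |T n ω / A n - 1|}
      ≤ ENNReal.ofReal (Bsq n / (ε * A n) ^ 2) := by
    intro n
    have hpos2 : (0:ℝ) < (ε * A n) ^ 2 := pow_pos (mul_pos hε (hApos n)) 2
    have hc0 : ENNReal.ofReal ((ε * A n) ^ 2) ≠ 0 := by
      simp [ENNReal.ofReal_eq_zero, not_le, hpos2, hε.ne', (hApos n).ne']
    have hmeasT : AEMeasurable (fun ω => ENNReal.ofReal ((T n ω - A n) ^ 2)) P :=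
      (((hTmeas n).sub measurable_const).pow_const 2).ennreal_ofReal.aemeasurable
    calc P {ω | ε ≤ |T n ω / A n - 1|}
        ≤ P {ω | ENNReal.ofReal ((ε * A n) ^ 2) ≤ ENNReal.ofReal ((T n ω - A n) ^ 2)} :=
          measure_mono (hsub n)
      _ ≤ (∫⁻ ω, ENNReal.ofReal ((T n ω - A n) ^ 2) ∂P) / ENNReal.ofReal ((ε * A n) ^ 2) :=
          meas_ge_le_lintegral_div hmeasT hc0 ENNReal.ofReal_ne_top
      _ ≤ ENNReal.ofReal (Bsq n) / ENNReal.ofReal ((ε * A n) ^ 2) :=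
          ENNReal.div_le_div_right (hmain n) _
      _ = ENNReal.ofReal (Bsq n / (ε * A n) ^ 2) :=
          (ENNReal.ofReal_div_of_pos hpos2).symm
  have hupper : Tendsto (fun n => ENNReal.ofReal (Bsq n / (ε * A n) ^ 2)) atTop (𝓝 0) := by
    rw [show (0:ENNReal) = ENNReal.ofReal 0 by simp]
    refine ENNReal.tendsto_ofReal ?_
    rw [Metric.tendsto_atTop]
    intro δ hδ
    obtain ⟨N, hN⟩ := key (δ / 2 * ε ^ 2) (by
      have := pow_pos hε 2
      nlinarith)
    refine ⟨N, fun n hn => ?_⟩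
    have hA0 := hApos n
    have hpos2 : (0:ℝ) < (ε * A n) ^ 2 := pow_pos (mul_pos hε hA0) 2
    rw [Real.dist_eq, sub_zero,
      abs_of_nonneg (div_nonneg (hBnonneg n) hpos2.le)]
    have h2 : Bsq n / (ε * A n) ^ 2 ≤ δ / 2 := by
      rw [div_le_iff₀ hpos2]
      calc Bsq n ≤ δ / 2 * ε ^ 2 * A n ^ 2 := hN n hn
        _ = δ / 2 * (ε * A n) ^ 2 := by ring
    linarith
  exact tendsto_of_tendsto_of_tendsto_of_le_of_le tendsto_const_nhds hupper
    (fun n => bot_le) hbound
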